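/- Let γ be a Jordan curve, k a positive integer, and A a family of planar sets each bounded by a closed Jordan curve and each intersecting γ in at most k intervals (arcs). Then for any n points on γ, any subfamily of A separating these points has cardinality at least (n − 1)/(2k). -/

import Mathlib

/-- Points of the plane. -/
abbrev Pt := ℝ × ℝ

/-- A family `F` of planar sets separates a finite point set `P` if for every
pair of distinct points of `P` some member of `F` contains exactly one of them. -/
def SepPts (F : Finset (Set Pt)) (P : Finset Pt) : Prop :=
  ∀ x ∈ P, ∀ y ∈ P, x ≠ y → ∃ S ∈ F, (x ∈ S ↔ y ∉ S)

/-- A (closed) halfplane. -/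
def IsHalfplane (S : Set Pt) : Prop :=
  ∃ u : Pt, ∃ c : ℝ, u ≠ 0 ∧ S = {p : Pt | p.1 * u.1 + p.2 * u.2 ≤ c}

/-- A closed disc of positive radius. -/
def IsClosedDisc (S : Set Pt) : Prop :=
  ∃ q : Pt, ∃ r : ℝ, 0 < r ∧ S = Metric.closedBall q r

/-- A finite point set is in general position if no three of its points are
collinear. -/
def GenPos (P : Finset Pt) : Prop :=
  ∀ a ∈ P, ∀ b ∈ P, ∀ c ∈ P, a ≠ b → a ≠ c → b ≠ c → ¬ Collinear ℝ ({a, b, c} : Set Pt)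

/-- A finite point set is in convex position if each of its points is an
extreme point of the convex hull, i.e. lies outside the hull of the others. -/
def ConvexPos (Q : Finset Pt) : Prop :=
  ∀ q ∈ Q, q ∉ convexHull ℝ (↑(Q.erase q) : Set Pt)

/-- A finite point set lying on a circle. -/
def OnCircle (P : Finset Pt) : Prop :=
  ∃ q : Pt, ∃ r : ℝ, 0 < r ∧ ∀ x ∈ P, dist x q = r

lemma fract_mem_iff (a b t : ℝ) (ht : t ∈ Set.Ico (0:ℝ) 1) :
    (∃ s ∈ Set.Icc a b, Int.fract s = t) ↔ Int.fract (t - a) ≤ b - a := by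
  constructor
  · rintro ⟨s, hs, rfl⟩
    have h1 : Int.fract (Int.fract s - a) = Int.fract (s - a) := by
      rw [← Int.self_sub_floor s, show s - (⌊s⌋:ℝ) - a = (s - a) - (⌊s⌋:ℤ) by push_cast; ring,
        Int.fract_sub_intCast]
    have h2 : (0:ℝ) ≤ s - a := by linarith [hs.1]
    have h3 : (0:ℝ) ≤ ((⌊s - a⌋ : ℤ) : ℝ) := by exact_mod_cast Int.floor_nonneg.mpr h2
    have h4 : Int.fract (s - a) ≤ s - a := by
      rw [← Int.self_sub_floor]; linarith
    rw [h1]; linarith [hs.2]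
  · intro h
    refine ⟨a + Int.fract (t - a), ⟨by linarith [Int.fract_nonneg (t - a)], by linarith⟩, ?_⟩
    rw [← Int.self_sub_floor (t - a),
      show a + (t - a - (⌊t - a⌋:ℤ)) = t - (⌊t - a⌋:ℤ) by push_cast; ring,
      Int.fract_sub_intCast, Int.fract_eq_self.mpr ⟨ht.1, ht.2⟩]

private lemma fract_A (a L x y : ℝ) (hxy : x ≤ y) (hfl : ⌊x - a⌋ = ⌊y - a⌋)
    (h : Int.fract (y - a) ≤ L) : Int.fract (x - a) ≤ L := by
  rw [← Int.self_sub_floor] at h ⊢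
  rw [hfl]; linarith

private lemma fract_B (a L x y : ℝ) (hxy : y - x < 1) (hfl : ⌊x - a⌋ < ⌊y - a⌋)
    (h : Int.fract (x - a) ≤ L) : Int.fract (y - a) ≤ L := by
  rw [← Int.self_sub_floor] at h ⊢
  have : (⌊x - a⌋ : ℝ) + 1 ≤ (⌊y - a⌋ : ℝ) := by exact_mod_cast hfl
  linarith

private lemma floor_span (a x y : ℝ) (hspan : y - x < 1) :
    ⌊y - a⌋ ≤ ⌊x - a⌋ + 1 := by
  have : ⌊y - a⌋ ≤ ⌊x - a + 1⌋ := Int.floor_le_floor (by linarith)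
  rwa [Int.floor_add_one] at this

lemma no_TFTF (a L x1 x2 x3 x4 : ℝ) (h12 : x1 ≤ x2) (h23 : x2 ≤ x3) (h34 : x3 ≤ x4)
    (hspan : x4 - x1 < 1)
    (p1 : Int.fract (x1 - a) ≤ L) (p2 : ¬ Int.fract (x2 - a) ≤ L)
    (p3 : Int.fract (x3 - a) ≤ L) (p4 : ¬ Int.fract (x4 - a) ≤ L) : False := by
  have m23 : ⌊x2 - a⌋ < ⌊x3 - a⌋ := by
    rcases lt_or_eq_of_le (Int.floor_le_floor (by linarith : x2 - a ≤ x3 - a)) with h | h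
    · exact h
    · exact absurd (fract_A a L x2 x3 h23 h p3) p2
  have m12 : ⌊x1 - a⌋ ≤ ⌊x2 - a⌋ := Int.floor_le_floor (by linarith)
  have m34 : ⌊x3 - a⌋ ≤ ⌊x4 - a⌋ := Int.floor_le_floor (by linarith)
  exact p4 (fract_B a L x1 x4 (by linarith) (by omega) p1)

lemma no_FTFT (a L x1 x2 x3 x4 : ℝ) (h12 : x1 ≤ x2) (h23 : x2 ≤ x3) (h34 : x3 ≤ x4)
    (hspan : x4 - x1 < 1)
    (p1 : ¬ Int.fract (x1 - a) ≤ L) (p2 : Int.fract (x2 - a) ≤ L)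
    (p3 : ¬ Int.fract (x3 - a) ≤ L) (p4 : Int.fract (x4 - a) ≤ L) : False := by
  have m12 : ⌊x1 - a⌋ < ⌊x2 - a⌋ := by
    rcases lt_or_eq_of_le (Int.floor_le_floor (by linarith : x1 - a ≤ x2 - a)) with h | h
    · exact h
    · exact absurd (fract_A a L x1 x2 h12 h p2) p1
  have m34 : ⌊x3 - a⌋ < ⌊x4 - a⌋ := by
    rcases lt_or_eq_of_le (Int.floor_le_floor (by linarith : x3 - a ≤ x4 - a)) with h | h
    · exact h
    · exact absurd (fract_A a L x3 x4 h34 h p4) p3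
  have m23 : ⌊x2 - a⌋ ≤ ⌊x3 - a⌋ := Int.floor_le_floor (by linarith)
  have := floor_span a x1 x4 (by linarith)
  omega

/-- If each member of a family meets a Jordan curve `γ` in at most `k` arcs,
then separating `n` points of `γ` requires at least `(n - 1)/(2k)` members. -/
theorem jordan_arcs_lower_bound (γ : Set Pt) (f : ℝ → Pt) (hf : Continuous f)
    (hper : Function.Periodic f 1) (hinjf : Set.InjOn f (Set.Ico 0 1))
    (hγ : γ = f '' Set.Ico 0 1)
    (k : ℕ) (hk : 0 < k) (n : ℕ) (p : Fin n → Pt) (hpinj : Function.Injective p)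
    (hpγ : ∀ i, p i ∈ γ)
    (F : Finset (Set Pt))
    (harcs : ∀ A ∈ F, ∃ a b : Fin k → ℝ, A ∩ γ = ⋃ i, f '' Set.Icc (a i) (b i))
    (hsep : ∀ i j : Fin n, i ≠ j → ∃ S ∈ F, (p i ∈ S ↔ p j ∉ S)) :
    ((n : ℝ) - 1) / (2 * k) ≤ F.card := by
  classical
  have hk2 : (0:ℝ) < 2 * k := by positivity
  rcases n with _ | m
  · refine le_trans (div_nonpos_of_nonpos_of_nonneg (by norm_num) hk2.le) ?_
    exact Nat.cast_nonneg _
  suffices h : m ≤ F.card * (2 * k) by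
    rw [div_le_iff₀ hk2]
    have : (m:ℝ) ≤ (F.card : ℝ) * (2 * k) := by exact_mod_cast h
    push_cast
    linarith
  -- extract parameters in [0,1)
  have hpt : ∀ i, ∃ s ∈ Set.Ico (0:ℝ) 1, f s = p i := by
    intro i
    have := hpγ i
    rw [hγ] at this
    rcases this with ⟨s, hs, hfs⟩
    exact ⟨s, hs, hfs⟩
  choose t ht hft using hpt
  have htinj : Function.Injective t := by
    intro i j hij
    apply hpinj
    rw [← hft i, ← hft j, hij]
  set σ := Tuple.sort t with hσdef
  have hmono : StrictMono (t ∘ σ) :=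
    (Tuple.monotone_sort t).strictMono_of_injective (htinj.comp σ.injective)
  set u : Fin (m + 1) → ℝ := t ∘ σ with hudef
  have hu01 : ∀ i, u i ∈ Set.Ico (0:ℝ) 1 := fun i => ht _
  have hfu : ∀ i, f (u i) = p (σ i) := fun i => hft _
  have hfr : ∀ s : ℝ, f (Int.fract s) = f s := by
    intro s
    rw [← Int.self_sub_floor s]
    simpa using hper.sub_int_mul_eq (x := s) ⌊s⌋
  -- choose separating sets for consecutive pairs
  have hne : ∀ j : Fin m, σ j.castSucc ≠ σ j.succ := by
    intro j h
    exact absurd (σ.injective h) (Fin.ne_of_lt (Fin.castSucc_lt_succ : j.castSucc < j.succ))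
  choose S hSF hSsep using fun j : Fin m => hsep (σ j.castSucc) (σ j.succ) (hne j)
  -- each fiber has size at most 2k
  have fiber : ∀ A ∈ F,
      (Finset.univ.filter (fun j : Fin m => S j = A)).card ≤ 2 * k := by
    intro A hA
    obtain ⟨a, b, hab⟩ := harcs A hA
    have hmem : ∀ i : Fin (m + 1),
        p (σ i) ∈ A ↔ ∃ l : Fin k, Int.fract (u i - a l) ≤ b l - a l := by
      intro i
      constructor
      · intro h
        have h2 : p (σ i) ∈ A ∩ γ := ⟨h, hpγ _⟩
        rw [hab] at h2
        rcases Set.mem_iUnion.mp h2 with ⟨l, s, hs, hfs⟩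
        refine ⟨l, (fract_mem_iff (a l) (b l) (u i) (hu01 i)).mp ⟨s, hs, ?_⟩⟩
        have heq : f (Int.fract s) = f (u i) := by rw [hfr s, hfu i, hfs]
        exact hinjf ⟨Int.fract_nonneg s, Int.fract_lt_one s⟩ (hu01 i) heq
      · rintro ⟨l, hl⟩
        obtain ⟨s, hs, hfs⟩ := (fract_mem_iff (a l) (b l) (u i) (hu01 i)).mpr hl
        have h1 : f s ∈ A ∩ γ := by
          rw [hab]
          exact Set.mem_iUnion.mpr ⟨l, ⟨s, hs, rfl⟩⟩
        have h2 : f s = p (σ i) := by rw [← hfu i, ← hfs, hfr s]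
        rw [← h2]
        exact h1.1
    have hφex : ∀ j : Fin m, ∃ q : Fin k × Bool, S j = A →
        ((q.2 = true ∧ ¬ Int.fract (u j.castSucc - a q.1) ≤ b q.1 - a q.1 ∧
            Int.fract (u j.succ - a q.1) ≤ b q.1 - a q.1) ∨
         (q.2 = false ∧ Int.fract (u j.castSucc - a q.1) ≤ b q.1 - a q.1 ∧
            ¬ Int.fract (u j.succ - a q.1) ≤ b q.1 - a q.1)) := by
      intro j
      by_cases hj : S j = A
      · have hx : p (σ j.castSucc) ∈ A ↔ p (σ j.succ) ∉ A := by
          rw [← hj]; exact hSsep j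
        by_cases hc : p (σ j.succ) ∈ A
        · have h1 : p (σ j.castSucc) ∉ A := fun h => (hx.mp h) hc
          obtain ⟨l, hl⟩ := (hmem j.succ).mp hc
          have h2 : ¬ Int.fract (u j.castSucc - a l) ≤ b l - a l :=
            fun h => h1 ((hmem j.castSucc).mpr ⟨l, h⟩)
          exact ⟨(l, true), fun _ => Or.inl ⟨rfl, h2, hl⟩⟩
        · have h1 : p (σ j.castSucc) ∈ A := hx.mpr hc
          obtain ⟨l, hl⟩ := (hmem j.castSucc).mp h1
          have h2 : ¬ Int.fract (u j.succ - a l) ≤ b l - a l :=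
            fun h => hc ((hmem j.succ).mpr ⟨l, h⟩)
          exact ⟨(l, false), fun _ => Or.inr ⟨rfl, hl, h2⟩⟩
      · exact ⟨(⟨0, hk⟩, true), fun h => absurd h hj⟩
    choose φ hφ using hφex
    have hspan : ∀ i i' : Fin (m + 1), u i' - u i < 1 := by
      intro i i'
      have h1 := (hu01 i).1
      have h2 := (hu01 i').2
      linarith
    have horder : ∀ j1 j2 : Fin m, j1 < j2 → u j1.succ ≤ u j2.castSucc := by
      intro j1 j2 h
      apply hmono.monotone
      rw [Fin.le_def]
      simp only [Fin.val_succ, Fin.coe_castSucc]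
      exact Fin.lt_def.mp h
    have hcs : ∀ j : Fin m, u j.castSucc ≤ u j.succ :=
      fun j => hmono.monotone (le_of_lt (Fin.castSucc_lt_succ : j.castSucc < j.succ))
    have key : ∀ j1 j2 : Fin m, j1 < j2 → S j1 = A → S j2 = A → φ j1 = φ j2 → False := by
      intro j1 j2 hlt hj1 hj2 hq
      have h1 := hφ j1 hj1
      have h2 := hφ j2 hj2
      rw [hq] at h1
      have ho1 : u j1.castSucc ≤ u j1.succ := hcs j1
      have ho2 : u j1.succ ≤ u j2.castSucc := horder j1 j2 hlt
      have ho3 : u j2.castSucc ≤ u j2.succ := hcs j2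
      have hsp : u j2.succ - u j1.castSucc < 1 := hspan _ _
      rcases h1 with ⟨hb1, hp1, hp1'⟩ | ⟨hb1, hp1, hp1'⟩ <;>
        rcases h2 with ⟨hb2, hp2, hp2'⟩ | ⟨hb2, hp2, hp2'⟩
      · exact no_FTFT (a (φ j2).1) (b (φ j2).1 - a (φ j2).1) _ _ _ _
          ho1 ho2 ho3 hsp hp1 hp1' hp2 hp2'
      · exact Bool.noConfusion (hb1.symm.trans hb2)
      · exact Bool.noConfusion (hb2.symm.trans hb1)
      · exact no_TFTF (a (φ j2).1) (b (φ j2).1 - a (φ j2).1) _ _ _ _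
          ho1 ho2 ho3 hsp hp1 hp1' hp2 hp2'
    have hinjOn : Set.InjOn φ ↑(Finset.univ.filter (fun j : Fin m => S j = A)) := by
      intro j1 hj1 j2 hj2 hq
      simp only [Finset.coe_filter, Set.mem_setOf_eq, Finset.mem_univ, true_and] at hj1 hj2
      by_contra hne12
      rcases lt_or_gt_of_ne hne12 with hlt | hlt
      · exact key j1 j2 hlt hj1 hj2 hq
      · exact key j2 j1 hlt hj2 hj1 hq.symm
    calc (Finset.univ.filter (fun j : Fin m => S j = A)).card
        ≤ (Finset.univ : Finset (Fin k × Bool)).card :=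
          Finset.card_le_card_of_injOn φ (fun x _ => Finset.mem_univ _) hinjOn
      _ = 2 * k := by simp [Finset.card_univ]; omega
  have hcount : (Finset.univ : Finset (Fin m)).card =
      ∑ A ∈ F, (Finset.univ.filter (fun j : Fin m => S j = A)).card :=
    Finset.card_eq_sum_card_fiberwise (fun j _ => hSF j)
  rw [Finset.card_univ, Fintype.card_fin] at hcount
  calc m = ∑ A ∈ F, (Finset.univ.filter (fun j : Fin m => S j = A)).card := hcount
    _ ≤ ∑ _A ∈ F, 2 * k := Finset.sum_le_sum fiber
    _ = F.card * (2 * k) := by rw [Finset.sum_const, smul_eq_mul]
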